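/- Let G be a finite group, Z ≤ Z(G), and P a p-subgroup of G containing O_p(Z). Then the image of N_G(P) in G/Z equals N_{G/Z}(PZ/Z). -/

import Mathlib

/-- Let `Z ≤ Z(G)` and `P` a `p`-subgroup of `G` containing `O_p(Z)`
(i.e. containing every element of `Z` of `p`-power order).
Then the image of `N_G(P)` in `G/Z` equals the normalizer of the image of `P`. -/
theorem stmt4 {G : Type*} [Group G] [Finite G] (p : ℕ) (hp : p.Prime)
    (Z : Subgroup G) [Z.Normal] (hZ : Z ≤ Subgroup.center G)
    (P : Subgroup G) (hP : IsPGroup p P)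
    (hOpZ : ∀ z ∈ Z, (∃ n : ℕ, orderOf z = p ^ n) → z ∈ P) :
    Subgroup.map (QuotientGroup.mk' Z) (Subgroup.normalizer (P : Set G)) =
      Subgroup.normalizer ((Subgroup.map (QuotientGroup.mk' Z) P : Subgroup (G ⧸ Z)) : Set (G ⧸ Z)) := by
  refine le_antisymm (Subgroup.le_normalizer_map _) ?_
  intro q hq
  obtain ⟨g, rfl⟩ := QuotientGroup.mk'_surjective Z q
  refine ⟨g, ?_, rfl⟩
  -- Show g P g⁻¹ ≤ P
  have hle : Subgroup.map (MulAut.conj g).toMonoidHom P ≤ P := by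
    rintro _ ⟨x, hx, rfl⟩
    simp only [MulEquiv.coe_toMonoidHom, MulAut.conj_apply]
    -- the image of g x g⁻¹ in the quotient lies in the image of P
    have hw : (QuotientGroup.mk' Z) (g * x * g⁻¹) ∈
        Subgroup.map (QuotientGroup.mk' Z) P := by
      have h1 : (QuotientGroup.mk' Z) x ∈ Subgroup.map (QuotientGroup.mk' Z) P :=
        ⟨x, hx, rfl⟩
      have := (Subgroup.mem_normalizer_iff.mp hq ((QuotientGroup.mk' Z) x)).mp h1
      simpa [map_mul, map_inv, mul_assoc] using this
    obtain ⟨y, hy, hyeq⟩ := hw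
    -- z := y⁻¹ * (g x g⁻¹) lies in Z
    have hz : y⁻¹ * (g * x * g⁻¹) ∈ Z := by
      have : ((y : G) : G ⧸ Z) = ((g * x * g⁻¹ : G) : G ⧸ Z) := hyeq
      exact (QuotientGroup.eq).mp this
    set z := y⁻¹ * (g * x * g⁻¹) with hzdef
    have hwz : g * x * g⁻¹ = y * z := by
      rw [hzdef, mul_inv_cancel_left]
    -- z is a p-element
    obtain ⟨n, hxn⟩ := hP ⟨x, hx⟩
    obtain ⟨m, hym⟩ := hP ⟨y, hy⟩
    have hxn' : x ^ p ^ n = 1 := by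
      have := congrArg (Subtype.val) hxn
      simpa using this
    have hym' : y ^ p ^ m = 1 := by
      have := congrArg (Subtype.val) hym
      simpa using this
    have hcomm : Commute y z := (Subgroup.mem_center_iff.mp (hZ hz) y)
    have hzpow : z ^ p ^ (n + m) = 1 := by
      have hw1 : (g * x * g⁻¹) ^ p ^ (n + m) = 1 := by
        have : (g * x * g⁻¹) ^ p ^ (n + m) = g * x ^ p ^ (n + m) * g⁻¹ := by
          simp [conj_pow]
        rw [this, pow_add, pow_mul, hxn', one_pow, mul_one, mul_inv_cancel]
      have hy1 : y ^ p ^ (n + m) = 1 := by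
        rw [pow_add, mul_comm (p ^ n), pow_mul, hym', one_pow]
      have := hcomm.mul_pow (p ^ (n + m))
      rw [← hwz, hw1, hy1, one_mul] at this
      exact this.symm
    have hzP : z ∈ P := by
      refine hOpZ z hz ?_
      have hdvd : orderOf z ∣ p ^ (n + m) := orderOf_dvd_of_pow_eq_one hzpow
      obtain ⟨k, _, hk⟩ := (Nat.dvd_prime_pow hp).mp hdvd
      exact ⟨k, hk⟩
    rw [hwz]
    exact P.mul_mem hy hzP
  -- by finiteness, g P g⁻¹ = P
  have hcard : Nat.card P ≤ Nat.card (Subgroup.map (MulAut.conj g).toMonoidHom P) :=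
    le_of_eq (Nat.card_congr
      (P.equivMapOfInjective _ (MulAut.conj g).injective).toEquiv)
  have heq : Subgroup.map (MulAut.conj g).toMonoidHom P = P :=
    Subgroup.eq_of_le_of_card_ge hle hcard
  rw [SetLike.mem_coe, Subgroup.mem_normalizer_iff]
  intro h
  constructor
  · intro hh
    have : (MulAut.conj g).toMonoidHom h ∈ Subgroup.map (MulAut.conj g).toMonoidHom P :=
      ⟨h, hh, rfl⟩
    rw [heq] at this
    simpa [mul_assoc] using this
  · intro hh
    have : g * h * g⁻¹ ∈ Subgroup.map (MulAut.conj g).toMonoidHom P := by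
      rw [heq]; exact hh
    obtain ⟨x, hx, hxeq⟩ := this
    simp only [MulEquiv.coe_toMonoidHom, MulAut.conj_apply] at hxeq
    have : h = x := by
      have := hxeq.symm
      group at this ⊢
      exact mul_left_cancel (mul_right_cancel this)
    rwa [this]
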